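/- arXiv:1209.1649 — 4 statements merged into one kernel-verified Lean document; each statement's English description precedes it below -/
import Mathlib

section
/- The extension formula is necessary (equation (5) of the paper): Let m ≥ 1, fix a word a ∈ (Fin n)^{m−1}, and suppose u : ℝ^{n−1} → ℝ is an eigenfunction of Δ_m with eigenvalue λ ∉ {2, n+2, 2n}. Then for all r ≠ s with r, s < n, u(x_{r,s}) = [ (4 − λ)(u(x_{r,r}) + u(x_{s,s})) + 2·∑_{j ≠ r,s} u(x_{j,j}) ] / ( (2 − λ)((n+2) − λ) ). -/
open Finset

noncomputable section

/-- Ambient Euclidean space `ℝ^{n-1}`. -/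
abbrev Amb (n : ℕ) := EuclideanSpace ℝ (Fin (n - 1))

/-- The contraction `f_i(x) = (x + x_i)/2`. -/
def fmap {n : ℕ} (pts : Fin n → Amb n) (i : Fin n) (x : Amb n) : Amb n :=
  (2 : ℝ)⁻¹ • (x + pts i)

/-- Composition of contractions along a list (first entry applied last... actually first). -/
def fList {n : ℕ} (pts : Fin n → Amb n) : List (Fin n) → Amb n → Amb n
  | [] => id
  | i :: t => fmap pts i ∘ fList pts t

/-- The `m`-contraction `f_w = f_{w_0} ∘ ⋯ ∘ f_{w_{m-1}}`. -/
def fWord {n m : ℕ} (pts : Fin n → Amb n) (w : Fin m → Fin n) : Amb n → Amb n :=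
  fList pts (List.ofFn w)

/-- The vertex set `V_m = ⋃_w f_w(V_0)`, where `V_0 = {x_0, …, x_{n-1}}`. -/
def V {n : ℕ} (pts : Fin n → Amb n) (m : ℕ) : Set (Amb n) :=
  ⋃ w : Fin m → Fin n, fWord pts w '' Set.range pts

/-- Adjacency in the graph `Γ_m`. -/
def Adj {n : ℕ} (pts : Fin n → Amb n) (m : ℕ) (x y : Amb n) : Prop :=
  x ≠ y ∧ ∃ w : Fin m → Fin n,
    x ∈ fWord pts w '' Set.range pts ∧ y ∈ fWord pts w '' Set.range pts

/-- The graph Laplacian `Δ_m u (x) = ∑_{y ~ x} (u(x) - u(y))`. -/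
def lap {n : ℕ} (pts : Fin n → Amb n) (m : ℕ) (u : Amb n → ℝ) (x : Amb n) : ℝ :=
  ∑ᶠ y ∈ {y | Adj pts m x y}, (u x - u y)

/-- `u` is an eigenfunction of `Δ_m` with eigenvalue `lam`:
`Δ_m u (x) = lam * u x` for all `x ∈ V_m \ V_0`. -/
def IsEigen {n : ℕ} (pts : Fin n → Amb n) (m : ℕ) (u : Amb n → ℝ) (lam : ℝ) : Prop :=
  ∀ x ∈ V pts m \ V pts 0, lap pts m u x = lam * u x

/-- The point `x_{r,s} = f_a((x_r + x_s)/2)` for a word `a` of length `m-1`. -/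
def xpt {n m : ℕ} (pts : Fin n → Amb n) (a : Fin m → Fin n) (r s : Fin n) : Amb n :=
  fWord pts a ((2 : ℝ)⁻¹ • (pts r + pts s))

/-- The graph energy `E_m(u) = ∑_{x ~ y} (u(x) - u(y))²`, summed over unordered
adjacent pairs (each ordered pair counted once, then halved). -/
def energy {n : ℕ} (pts : Fin n → Amb n) (m : ℕ) (u : Amb n → ℝ) : ℝ :=
  (2 : ℝ)⁻¹ * ∑ᶠ p ∈ {p : Amb n × Amb n | Adj pts m p.1 p.2}, (u p.1 - u p.2) ^ 2


namespace Ext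

variable {n : ℕ} (pts : Fin n → Amb n)

def ind {n : ℕ} (j i : Fin n) : ℕ := if j = i then 1 else 0

def P {n : ℕ} (m : ℕ) (b : Fin m → Fin n) (i : Fin n) : ℕ :=
  ∑ k : Fin m, 2 ^ (m - 1 - k.1) * ind (b k) i

lemma geo' : ∀ m : ℕ, ∑ k ∈ Finset.range m, 2 ^ k = 2 ^ m - 1 := by
  intro m
  induction m with
  | zero => simp
  | succ m ih =>
    rw [Finset.sum_range_succ, ih, pow_succ]
    have : 1 ≤ 2 ^ m := Nat.one_le_two_pow
    omega

lemma geo (m : ℕ) : ∑ k : Fin m, 2 ^ (m - 1 - k.1) = 2 ^ m - 1 := by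
  rw [Fin.sum_univ_eq_sum_range (fun k => 2 ^ (m - 1 - k)) m,
    Finset.sum_range_reflect (fun k => 2 ^ k) m, geo']

lemma ind_le_one (j i : Fin n) : ind j i ≤ 1 := by unfold ind; split <;> omega

lemma P_le (m : ℕ) (b : Fin m → Fin n) (i : Fin n) : P m b i ≤ 2 ^ m - 1 := by
  rw [← geo m]
  apply Finset.sum_le_sum
  intro k _
  calc 2 ^ (m-1-k.1) * ind (b k) i ≤ 2 ^ (m-1-k.1) * 1 :=
        Nat.mul_le_mul_left _ (ind_le_one _ _)
    _ = _ := Nat.mul_one _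

lemma P_succ (m : ℕ) (b : Fin (m+1) → Fin n) (i : Fin n) :
    P (m+1) b i = 2 ^ m * ind (b 0) i + P m (b ∘ Fin.succ) i := by
  unfold P
  rw [Fin.sum_univ_succ]
  simp only [Fin.val_zero, Fin.val_succ, Function.comp_apply, Nat.sub_zero,
    Nat.add_sub_cancel]
  congr 1
  apply Finset.sum_congr rfl; intro k _; congr 2; omega

lemma P_inj : ∀ (m : ℕ) (b c : Fin m → Fin n), P m b = P m c → b = c := by
  intro m
  induction m with
  | zero => intro b c _; funext k; exact k.elim0
  | succ m ih =>
    intro b c h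
    have h0 : b 0 = c 0 := by
      by_contra hne
      have h1 := congrFun h (b 0)
      have hb : ind (b 0) (b 0) = 1 := if_pos rfl
      have hc : ind (c 0) (b 0) = 0 := if_neg (fun h => hne h.symm)
      rw [P_succ, P_succ, hb, hc, Nat.mul_one, Nat.mul_zero, Nat.zero_add] at h1
      have l1 := P_le m (b ∘ Fin.succ) (b 0)
      have l2 := P_le m (c ∘ Fin.succ) (b 0)
      have hp : 1 ≤ 2 ^ m := Nat.one_le_two_pow
      omega
    have ht : b ∘ Fin.succ = c ∘ Fin.succ := by
      apply ih
      funext i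
      have h1 := congrFun h i
      rw [P_succ, P_succ, h0] at h1
      omega
    funext k
    refine Fin.cases ?_ ?_ k
    · exact h0
    · intro k; exact congrFun ht k

lemma P_split (m : ℕ) (w : Fin (m+1) → Fin n) (i : Fin n) :
    P (m+1) w i = ind (w (Fin.last m)) i + 2 * P m (w ∘ Fin.castSucc) i := by
  unfold P
  rw [Fin.sum_univ_castSucc]
  simp only [Fin.coe_castSucc, Fin.val_last, Function.comp_apply, Nat.add_sub_cancel,
    Nat.sub_self, pow_zero, one_mul]
  rw [add_comm, Finset.mul_sum]
  congr 1
  apply Finset.sum_congr rfl; intro k _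
  have hk := k.2
  have : m - k.1 = (m - 1 - k.1) + 1 := by omega
  rw [this, pow_succ]
  ring

lemma fWord_zero (w : Fin 0 → Fin n) (x : Amb n) : fWord pts w x = x := by
  simp [fWord, List.ofFn_zero, fList]

lemma fWord_succ (m : ℕ) (w : Fin (m+1) → Fin n) (x : Amb n) :
    fWord pts w x = fmap pts (w 0) (fWord pts (w ∘ Fin.succ) x) := by
  simp only [fWord, List.ofFn_succ, fList]
  rfl

lemma fWord_eq (m : ℕ) (w : Fin m → Fin n) (x : Amb n) :
    fWord pts w x = ((2:ℝ)^m)⁻¹ • x + ∑ k : Fin m, ((2:ℝ)^(k.1+1))⁻¹ • pts (w k) := by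
  induction m with
  | zero => simp [fWord_zero]
  | succ m ih =>
    rw [fWord_succ, ih (w ∘ Fin.succ), Fin.sum_univ_succ]
    unfold fmap
    simp only [Fin.val_zero, Fin.val_succ, Function.comp_apply]
    rw [smul_add, smul_add, smul_smul, Finset.smul_sum]
    have e1 : (2:ℝ)⁻¹ * ((2:ℝ)^m)⁻¹ = ((2:ℝ)^(m+1))⁻¹ := by
      rw [pow_succ, mul_inv]; ring
    have e2 : ∀ k : Fin m, (2:ℝ)⁻¹ • (((2:ℝ)^(k.1+1))⁻¹ • pts (w k.succ))
        = ((2:ℝ)^(k.1+1+1))⁻¹ • pts (w k.succ) := by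
      intro k; rw [smul_smul]; congr 1; rw [pow_succ, mul_inv]; ring
    rw [e1, Finset.sum_congr rfl (fun k _ => e2 k)]
    have e3 : ((2:ℝ)^((0:ℕ)+1))⁻¹ = (2:ℝ)⁻¹ := by norm_num
    rw [e3]
    abel

def comb (c : Fin n → ℝ) : Amb n := ∑ i, c i • pts i

lemma sum_indR_smul (c : ℝ) (j : Fin n) :
    (∑ i, (c * (if j = i then (1:ℝ) else 0)) • pts i) = c • pts j := by
  rw [Finset.sum_eq_single j]
  · simp
  · intro i _ hij; simp [Ne.symm hij]
  · simp

lemma comb_swap (m : ℕ) (b : Fin m → Fin n) (g : Fin m → ℝ) :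
    (∑ i, (∑ k : Fin m, g k * (if b k = i then (1:ℝ) else 0)) • pts i)
      = ∑ k : Fin m, g k • pts (b k) := by
  have : ∀ i, (∑ k : Fin m, g k * (if b k = i then (1:ℝ) else 0)) • pts i
      = ∑ k : Fin m, (g k * (if b k = i then (1:ℝ) else 0)) • pts i := by
    intro i; rw [Finset.sum_smul]
  rw [Finset.sum_congr rfl (fun i _ => this i), Finset.sum_comm]
  apply Finset.sum_congr rfl
  intro k _
  exact sum_indR_smul pts (g k) (b k)

def Nw {n : ℕ} (m : ℕ) (w : Fin m → Fin n) (j : Fin n) (i : Fin n) : ℕ :=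
  ind j i + P m w i

def Nx {n : ℕ} (m' : ℕ) (a : Fin m' → Fin n) (r s : Fin n) (i : Fin n) : ℕ :=
  ind r i + ind s i + 2 * P m' a i

lemma Nw_cast (m : ℕ) (w : Fin m → Fin n) (j i : Fin n) :
    ((Nw m w j i : ℕ) : ℝ)
      = (if j = i then (1:ℝ) else 0)
        + ∑ k : Fin m, ((2:ℝ)^(m-1-k.1)) * (if w k = i then (1:ℝ) else 0) := by
  unfold Nw P ind
  push_cast
  ring

lemma Nx_cast (m' : ℕ) (a : Fin m' → Fin n) (r s i : Fin n) :
    ((Nx m' a r s i : ℕ) : ℝ)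
      = (if r = i then (1:ℝ) else 0) + (if s = i then (1:ℝ) else 0)
        + ∑ k : Fin m', 2 * ((2:ℝ)^(m'-1-k.1)) * (if a k = i then (1:ℝ) else 0) := by
  unfold Nx P ind
  push_cast
  rw [Finset.mul_sum]
  congr 1
  apply Finset.sum_congr rfl; intro k _; ring

lemma coef_pow (m k : ℕ) (hk : k < m) :
    ((2:ℝ)^m)⁻¹ * (2:ℝ)^(m-1-k) = ((2:ℝ)^(k+1))⁻¹ := by
  have h : (2:ℝ)^m = 2^(k+1) * 2^(m-1-k) := by
    rw [← pow_add]; congr 1; omega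
  rw [h, mul_inv, mul_assoc,
    inv_mul_cancel₀ (pow_ne_zero _ (two_ne_zero)), mul_one]

lemma fWord_pts_eq_comb (m : ℕ) (w : Fin m → Fin n) (j : Fin n) :
    fWord pts w (pts j) = comb pts (fun i => ((2:ℝ)^m)⁻¹ * (Nw m w j i)) := by
  rw [fWord_eq]
  unfold comb
  have : ∀ i : Fin n, (((2:ℝ)^m)⁻¹ * (Nw m w j i)) • pts i
      = (((2:ℝ)^m)⁻¹ * (if j = i then (1:ℝ) else 0)) • pts i
        + (∑ k : Fin m, (((2:ℝ)^m)⁻¹ * (2:ℝ)^(m-1-k.1)) * (if w k = i then (1:ℝ) else 0)) • pts i := by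
    intro i
    rw [← add_smul]
    congr 1
    rw [Nw_cast, mul_add, Finset.mul_sum]
    congr 1
    apply Finset.sum_congr rfl; intro k _; ring
  rw [Finset.sum_congr rfl (fun i _ => this i), Finset.sum_add_distrib,
    sum_indR_smul, comb_swap]
  congr 1
  apply Finset.sum_congr rfl
  intro k _
  rw [coef_pow m k.1 k.2]

lemma xpt_eq_comb (m' : ℕ) (a : Fin m' → Fin n) (r s : Fin n) :
    xpt pts a r s = comb pts (fun i => ((2:ℝ)^(m'+1))⁻¹ * (Nx m' a r s i)) := by
  unfold xpt
  rw [fWord_eq]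
  unfold comb
  have : ∀ i : Fin n, (((2:ℝ)^(m'+1))⁻¹ * (Nx m' a r s i)) • pts i
      = (((2:ℝ)^(m'+1))⁻¹ * (if r = i then (1:ℝ) else 0)) • pts i
        + (((2:ℝ)^(m'+1))⁻¹ * (if s = i then (1:ℝ) else 0)) • pts i
        + (∑ k : Fin m', (((2:ℝ)^m')⁻¹ * (2:ℝ)^(m'-1-k.1)) * (if a k = i then (1:ℝ) else 0)) • pts i := by
    intro i
    rw [← add_smul, ← add_smul]
    congr 1
    rw [Nx_cast, mul_add, mul_add, Finset.mul_sum]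
    congr 1
    apply Finset.sum_congr rfl; intro k _
    rw [pow_succ, mul_inv]
    ring
  rw [Finset.sum_congr rfl (fun i _ => this i), Finset.sum_add_distrib,
    Finset.sum_add_distrib, sum_indR_smul, sum_indR_smul, comb_swap]
  have hc : ((2:ℝ)^m')⁻¹ * 2⁻¹ = ((2:ℝ)^(m'+1))⁻¹ := by
    rw [pow_succ, mul_inv]
  have hx : ((2:ℝ)^(m'))⁻¹ • ((2 : ℝ)⁻¹ • (pts r + pts s))
      = ((2:ℝ)^(m'+1))⁻¹ • pts r + ((2:ℝ)^(m'+1))⁻¹ • pts s := by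
    simp only [smul_add, smul_smul, hc]
  rw [hx]
  congr 1
  apply Finset.sum_congr rfl
  intro k _
  rw [coef_pow m' k.1 k.2]

lemma sum_ind (j : Fin n) : ∑ i, ind (n := n) j i = 1 := by
  unfold ind
  rw [Finset.sum_eq_single j] <;> simp +contextual [eq_comm]

lemma sum_Nw (m : ℕ) (w : Fin m → Fin n) (j : Fin n) :
    ∑ i, Nw m w j i = 2 ^ m := by
  unfold Nw P
  rw [Finset.sum_add_distrib, sum_ind, Finset.sum_comm]
  have : ∀ k : Fin m, ∑ i, 2 ^ (m - 1 - k.1) * ind (w k) i = 2 ^ (m-1-k.1) := by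
    intro k; rw [← Finset.mul_sum, sum_ind, Nat.mul_one]
  rw [Finset.sum_congr rfl (fun k _ => this k), geo]
  have : 1 ≤ 2 ^ m := Nat.one_le_two_pow
  omega

lemma sum_Nx (m' : ℕ) (a : Fin m' → Fin n) (r s : Fin n) :
    ∑ i, Nx m' a r s i = 2 ^ (m' + 1) := by
  unfold Nx P
  rw [Finset.sum_add_distrib, Finset.sum_add_distrib, sum_ind, sum_ind, ← Finset.mul_sum,
    Finset.sum_comm]
  have : ∀ k : Fin m', ∑ i, 2 ^ (m' - 1 - k.1) * ind (a k) i = 2 ^ (m'-1-k.1) := by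
    intro k; rw [← Finset.mul_sum, sum_ind, Nat.mul_one]
  rw [Finset.sum_congr rfl (fun k _ => this k), geo, pow_succ]
  have : 1 ≤ 2 ^ m' := Nat.one_le_two_pow
  omega

lemma comb_inj (hpts : AffineIndependent ℝ pts) {c d : Fin n → ℝ}
    (hc : ∑ i, c i = 1) (hd : ∑ i, d i = 1) (h : comb pts c = comb pts d) : c = d := by
  apply (affineIndependent_iff_eq_of_fintype_affineCombination_eq ℝ pts).mp hpts c d hc hd
  rw [Finset.affineCombination_eq_linear_combination _ _ _ hc,
    Finset.affineCombination_eq_linear_combination _ _ _ hd]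
  exact h

lemma sum_coef_one (M : ℕ) (A : Fin n → ℕ) (hA : ∑ i, A i = 2 ^ M) :
    ∑ i, ((2:ℝ)^M)⁻¹ * (A i : ℝ) = 1 := by
  rw [← Finset.mul_sum, ← Nat.cast_sum, hA]
  push_cast
  rw [inv_mul_cancel₀ (pow_ne_zero _ (two_ne_zero))]

lemma comb_nat_inj (hpts : AffineIndependent ℝ pts) (M : ℕ) (A B : Fin n → ℕ)
    (hA : ∑ i, A i = 2 ^ M) (hB : ∑ i, B i = 2 ^ M)
    (h : comb pts (fun i => ((2:ℝ)^M)⁻¹ * (A i : ℝ)) = comb pts (fun i => ((2:ℝ)^M)⁻¹ * (B i : ℝ))) :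
    A = B := by
  have := comb_inj pts hpts (sum_coef_one M A hA) (sum_coef_one M B hB) h
  funext i
  have h1 := congrFun this i
  have h2 : (A i : ℝ) = B i :=
    mul_left_cancel₀ (inv_ne_zero (pow_ne_zero _ (two_ne_zero))) h1
  exact_mod_cast h2

lemma fWord_eq_xpt_iff (hpts : AffineIndependent ℝ pts) (m' : ℕ)
    (w : Fin (m'+1) → Fin n) (j r s : Fin n) (a : Fin m' → Fin n) :
    fWord pts w (pts j) = xpt pts a r s ↔ Nw (m'+1) w j = Nx m' a r s := by
  constructor
  · intro h
    rw [fWord_pts_eq_comb, xpt_eq_comb] at h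
    exact comb_nat_inj pts hpts (m'+1) _ _ (sum_Nw _ w j) (sum_Nx m' a r s) h
  · intro h
    rw [fWord_pts_eq_comb, xpt_eq_comb, h]

lemma xpt_eq_xpt_iff (hpts : AffineIndependent ℝ pts) (m' : ℕ)
    (a : Fin m' → Fin n) (p q p' q' : Fin n) :
    xpt pts a p q = xpt pts a p' q' ↔ Nx m' a p q = Nx m' a p' q' := by
  constructor
  · intro h
    rw [xpt_eq_comb, xpt_eq_comb] at h
    exact comb_nat_inj pts hpts (m'+1) _ _ (sum_Nx m' a p q) (sum_Nx m' a p' q') h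
  · intro h
    rw [xpt_eq_comb, xpt_eq_comb, h]

lemma Nx_eq_iff (m' : ℕ) (a : Fin m' → Fin n) (p q p' q' : Fin n) :
    Nx m' a p q = Nx m' a p' q' ↔ ∀ i, ind p i + ind q i = ind p' i + ind q' i := by
  constructor
  · intro h i
    have := congrFun h i
    unfold Nx at this
    omega
  · intro h
    funext i
    unfold Nx
    have := h i
    omega

lemma xpt_comm (m' : ℕ) (a : Fin m' → Fin n) (p q : Fin n) :
    xpt pts a p q = xpt pts a q p := by
  unfold xpt
  rw [add_comm]

lemma xpt_right_inj (hpts : AffineIndependent ℝ pts) (m' : ℕ) (a : Fin m' → Fin n)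
    {p q q' : Fin n} (h : xpt pts a p q = xpt pts a p q') : q = q' := by
  rw [xpt_eq_xpt_iff pts hpts, Nx_eq_iff] at h
  have h1 := h q
  have h2 : ind (n := n) q q = 1 := if_pos rfl
  by_contra hne
  have h3 : ind (n := n) q' q = 0 := if_neg (fun hh => hne hh.symm)
  omega

lemma xpt_rs_ne (hpts : AffineIndependent ℝ pts) (m' : ℕ) (a : Fin m' → Fin n)
    {r s j j' : Fin n} (hrs : r ≠ s) (hj' : j' ≠ r) :
    xpt pts a r j ≠ xpt pts a s j' := by
  intro h
  rw [xpt_eq_xpt_iff pts hpts, Nx_eq_iff] at h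
  have h1 := h r
  have e1 : ind (n := n) r r = 1 := if_pos rfl
  have e2 : ind (n := n) s r = 0 := if_neg (fun hh => hrs hh.symm)
  have e3 : ind (n := n) j' r = 0 := if_neg (fun hh => hj' hh)
  have e4 : ind (n := n) j r ≤ 1 := ind_le_one _ _
  omega

lemma Nw_snoc (m' : ℕ) (a : Fin m' → Fin n) (p q i : Fin n) :
    Nw (m'+1) (Fin.snoc a p) q i = Nx m' a p q i := by
  unfold Nw Nx
  rw [P_split]
  rw [Fin.snoc_last, Fin.snoc_comp_castSucc]
  omega

lemma fWord_snoc_pts (m' : ℕ) (a : Fin m' → Fin n) (p q : Fin n) :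
    fWord pts (Fin.snoc a p) (pts q) = xpt pts a p q := by
  rw [fWord_pts_eq_comb, xpt_eq_comb]
  unfold comb
  apply Finset.sum_congr rfl
  intro i _
  simp only [Nw_snoc]

lemma Nw_eq_Nx_iff (m' : ℕ) (w : Fin (m'+1) → Fin n) (j r s : Fin n)
    (a : Fin m' → Fin n) (hrs : r ≠ s) :
    Nw (m'+1) w j = Nx m' a r s ↔
      (w ∘ Fin.castSucc = a ∧
        ((w (Fin.last m') = r ∧ j = s) ∨ (w (Fin.last m') = s ∧ j = r))) := by
  constructor
  · intro h
    have h' : ∀ i, ind j i + (ind (w (Fin.last m')) i + 2 * P m' (w ∘ Fin.castSucc) i)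
        = ind r i + ind s i + 2 * P m' a i := by
      intro i
      have := congrFun h i
      unfold Nw Nx at this
      rw [P_split] at this
      omega
    set l := w (Fin.last m') with hl
    have hr := h' r
    have hs := h' s
    have key : (j = r ∧ l = s) ∨ (j = s ∧ l = r) := by
      by_cases hjr : j = r <;> by_cases hjs : j = s <;>
        by_cases hlr : l = r <;> by_cases hls : l = s <;>
        simp only [ind, hjr, hjs, hlr, hls, if_pos, if_neg, hrs, Ne.symm hrs,
          reduceIte] at hr hs <;>
        first
          | (left; exact ⟨hjr, hls⟩)
          | (right; exact ⟨hjs, hlr⟩)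
          | (exfalso; first
              | exact hrs (hjr ▸ hjs ▸ rfl)
              | omega)
    have hP : P m' (w ∘ Fin.castSucc) = P m' a := by
      funext i
      have hi := h' i
      rcases key with ⟨hj, hlv⟩ | ⟨hj, hlv⟩ <;> rw [hj, hlv] at hi <;> omega
    refine ⟨P_inj m' _ _ hP, ?_⟩
    rcases key with ⟨hj, hlv⟩ | ⟨hj, hlv⟩
    · right; exact ⟨hlv, hj⟩
    · left; exact ⟨hlv, hj⟩
  · rintro ⟨ha, hc⟩
    funext i
    unfold Nw
    rw [P_split, ha]
    rcases hc with ⟨hl, hj⟩ | ⟨hl, hj⟩ <;> rw [hl, hj] <;> unfold Nx <;> omega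

lemma V_zero : V pts 0 = Set.range pts := by
  unfold V
  ext x
  constructor
  · rintro ⟨S, ⟨w, rfl⟩, hx⟩
    rcases hx with ⟨y, ⟨i, rfl⟩, rfl⟩
    rw [fWord_zero]
    exact ⟨i, rfl⟩
  · rintro ⟨i, rfl⟩
    refine Set.mem_iUnion.mpr ⟨fun k => k.elim0, ⟨pts i, ⟨i, rfl⟩, ?_⟩⟩
    rw [fWord_zero]

lemma xpt_mem_V (m' : ℕ) (a : Fin m' → Fin n) (p q : Fin n) :
    xpt pts a p q ∈ V pts (m'+1) :=
  Set.mem_iUnion.mpr ⟨Fin.snoc a p, ⟨pts q, ⟨q, rfl⟩, fWord_snoc_pts pts m' a p q⟩⟩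

lemma xpt_notMem_V0 (hpts : AffineIndependent ℝ pts) (m' : ℕ) (a : Fin m' → Fin n)
    {r s : Fin n} (hrs : r ≠ s) : xpt pts a r s ∉ V pts 0 := by
  rw [V_zero]
  rintro ⟨i0, hi0⟩
  have hrep : pts i0 = comb pts (fun i => ((2:ℝ)^(m'+1))⁻¹ * ((2^(m'+1) * ind i0 i : ℕ) : ℝ)) := by
    unfold comb
    have : ∀ i : Fin n, (((2:ℝ)^(m'+1))⁻¹ * ((2^(m'+1) * ind i0 i : ℕ) : ℝ)) • pts i
        = ((1:ℝ) * (if i0 = i then (1:ℝ) else 0)) • pts i := by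
      intro i
      congr 1
      push_cast
      unfold ind
      rw [← mul_assoc, inv_mul_cancel₀ (pow_ne_zero _ (two_ne_zero))]
      push_cast
      ring
    rw [Finset.sum_congr rfl (fun i _ => this i), sum_indR_smul, one_smul]
  have hsum : ∑ i, 2^(m'+1) * ind i0 i = 2^(m'+1) := by
    rw [← Finset.mul_sum, sum_ind, Nat.mul_one]
  have heq : (fun i => 2^(m'+1) * ind i0 i) = Nx m' a r s := by
    apply comb_nat_inj pts hpts (m'+1) _ _ hsum (sum_Nx m' a r s)
    rw [← hrep, ← xpt_eq_comb, hi0]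
  have h1 := congrFun heq r
  unfold Nx at h1
  have e1 : ind (n := n) r r = 1 := if_pos rfl
  have e2 : ind (n := n) s r = 0 := if_neg (fun hh => hrs hh.symm)
  rw [e1, e2] at h1
  by_cases hi : i0 = r
  · have e4 : ind (n := n) i0 r = 1 := if_pos hi
    rw [e4, pow_succ] at h1
    omega
  · have e4 : ind (n := n) i0 r = 0 := if_neg hi
    rw [e4, Nat.mul_zero] at h1
    omega

lemma snoc_of_comp (m' : ℕ) (w : Fin (m'+1) → Fin n) (a : Fin m' → Fin n)
    (h : w ∘ Fin.castSucc = a) : w = Fin.snoc a (w (Fin.last m')) := by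
  funext k
  refine Fin.lastCases ?_ ?_ k
  · rw [Fin.snoc_last]
  · intro k
    rw [Fin.snoc_castSucc]
    exact congrFun h k

open scoped Classical in
def nbrs (m' : ℕ) (a : Fin m' → Fin n) (r s : Fin n) : Finset (Amb n) :=
  ((Finset.univ.filter (· ≠ s)).image (fun j => xpt pts a r j)) ∪
  ((Finset.univ.filter (· ≠ r)).image (fun j => xpt pts a s j))

lemma adj_set_eq (hpts : AffineIndependent ℝ pts) (m' : ℕ) (a : Fin m' → Fin n)
    (r s : Fin n) (hrs : r ≠ s) :
    {y | Adj pts (m'+1) (xpt pts a r s) y} = ↑(nbrs pts m' a r s) := by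
  classical
  ext y
  simp only [Set.mem_setOf_eq, Finset.mem_coe]
  constructor
  · rintro ⟨hne, w, ⟨x0, ⟨j0, rfl⟩, hx⟩, ⟨y0, ⟨j1, rfl⟩, hy⟩⟩
    rw [fWord_eq_xpt_iff pts hpts, Nw_eq_Nx_iff _ _ _ _ _ _ hrs] at hx
    obtain ⟨hcast, hcase⟩ := hx
    have hw : w = Fin.snoc a (w (Fin.last m')) := snoc_of_comp m' w a hcast
    rcases hcase with ⟨hl, hj0⟩ | ⟨hl, hj0⟩
    · have hy' : xpt pts a r j1 = y := by
        rw [← hy, hw, hl, fWord_snoc_pts]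
      have hj1 : j1 ≠ s := by
        intro hj1; apply hne; rw [← hy', hj1]
      exact Finset.mem_union_left _ (Finset.mem_image.mpr
        ⟨j1, Finset.mem_filter.mpr ⟨Finset.mem_univ _, hj1⟩, hy'⟩)
    · have hy' : xpt pts a s j1 = y := by
        rw [← hy, hw, hl, fWord_snoc_pts]
      have hj1 : j1 ≠ r := by
        intro hj1; apply hne
        rw [← hy', hj1, xpt_comm]
      exact Finset.mem_union_right _ (Finset.mem_image.mpr
        ⟨j1, Finset.mem_filter.mpr ⟨Finset.mem_univ _, hj1⟩, hy'⟩)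
  · intro hy
    rcases Finset.mem_union.mp hy with h | h
    · obtain ⟨j, hj, rfl⟩ := Finset.mem_image.mp h
      have hj' : j ≠ s := (Finset.mem_filter.mp hj).2
      refine ⟨fun hE => hj' (xpt_right_inj pts hpts m' a hE).symm,
        Fin.snoc a r,
        ⟨pts s, ⟨s, rfl⟩, fWord_snoc_pts pts m' a r s⟩,
        ⟨pts j, ⟨j, rfl⟩, fWord_snoc_pts pts m' a r j⟩⟩
    · obtain ⟨j, hj, rfl⟩ := Finset.mem_image.mp h
      have hj' : j ≠ r := (Finset.mem_filter.mp hj).2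
      refine ⟨xpt_rs_ne pts hpts m' a hrs hj',
        Fin.snoc a s,
        ⟨pts r, ⟨r, rfl⟩, by rw [fWord_snoc_pts, xpt_comm]⟩,
        ⟨pts j, ⟨j, rfl⟩, fWord_snoc_pts pts m' a s j⟩⟩

lemma lap_xpt (hpts : AffineIndependent ℝ pts) (m' : ℕ) (a : Fin m' → Fin n)
    (r s : Fin n) (hrs : r ≠ s) (u : Amb n → ℝ) :
    lap pts (m'+1) u (xpt pts a r s) =
      (∑ j ∈ Finset.univ.filter (· ≠ s), (u (xpt pts a r s) - u (xpt pts a r j)))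
      + (∑ j ∈ Finset.univ.filter (· ≠ r), (u (xpt pts a r s) - u (xpt pts a s j))) := by
  classical
  unfold lap
  rw [adj_set_eq pts hpts m' a r s hrs, finsum_mem_coe_finset]
  unfold nbrs
  classical
  have hdisj : Disjoint ((Finset.univ.filter (· ≠ s)).image (fun j => xpt pts a r j))
      ((Finset.univ.filter (· ≠ r)).image (fun j => xpt pts a s j)) := by
    rw [Finset.disjoint_left]
    intro y hy1 hy2
    obtain ⟨j, hj, rfl⟩ := Finset.mem_image.mp hy1
    obtain ⟨j', hj', hEq⟩ := Finset.mem_image.mp hy2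
    exact xpt_rs_ne pts hpts m' a hrs (Finset.mem_filter.mp hj').2 hEq.symm
  rw [Finset.sum_union hdisj,
    Finset.sum_image (fun x _ y _ h => xpt_right_inj pts hpts m' a h),
    Finset.sum_image (fun x _ y _ h => xpt_right_inj pts hpts m' a h)]

end Ext

theorem extension_helper
    (n : ℕ) (hn : 2 ≤ n) (pts : Fin n → Amb n) (hpts : AffineIndependent ℝ pts)
    (m' : ℕ) (a : Fin m' → Fin n) (lam : ℝ)
    (h2 : lam ≠ 2) (hn2 : lam ≠ (n : ℝ) + 2) (h2n : lam ≠ 2 * n)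
    (u : Amb n → ℝ) (hu : IsEigen pts (m' + 1) u lam)
    (r s : Fin n) (hrs : r ≠ s) :
    u (xpt pts a r s) =
      ((4 - lam) * (u (xpt pts a r r) + u (xpt pts a s s)) +
          2 * ∑ j ∈ Finset.univ.filter (fun j => j ≠ r ∧ j ≠ s), u (xpt pts a j j)) /
        ((2 - lam) * (((n : ℝ) + 2) - lam)) := by
  classical
  have hA : (2:ℝ) - lam ≠ 0 := sub_ne_zero_of_ne (Ne.symm h2)
  have hB : ((n:ℝ) + 2) - lam ≠ 0 := sub_ne_zero_of_ne (Ne.symm hn2)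
  have hC : 2*(n:ℝ) - lam ≠ 0 := sub_ne_zero_of_ne (Ne.symm h2n)
  have hn1 : (1:ℕ) ≤ n := by omega
  have key : ∀ p q : Fin n, p ≠ q →
      (2*(n:ℝ) - lam) * u (xpt pts a p q)
        = (∑ j, u (xpt pts a p j)) + (∑ j, u (xpt pts a q j)) := by
    intro p q hpq
    have hmem : xpt pts a p q ∈ V pts (m'+1) \ V pts 0 :=
      ⟨Ext.xpt_mem_V pts m' a p q, Ext.xpt_notMem_V0 pts hpts m' a hpq⟩
    have h := hu _ hmem
    rw [Ext.lap_xpt pts hpts m' a p q hpq u] at h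
    have h4 : (∑ j ∈ Finset.univ.erase q, u (xpt pts a p j)) + u (xpt pts a p q)
        = ∑ j, u (xpt pts a p j) := Finset.sum_erase_add _ _ (Finset.mem_univ q)
    have h5 : (∑ j ∈ Finset.univ.erase p, u (xpt pts a q j)) + u (xpt pts a q p)
        = ∑ j, u (xpt pts a q j) := Finset.sum_erase_add _ _ (Finset.mem_univ p)
    have hqp : xpt pts a q p = xpt pts a p q := Ext.xpt_comm pts m' a q p
    rw [hqp] at h5
    have e1 : ∑ j ∈ Finset.univ.filter (· ≠ q), (u (xpt pts a p q) - u (xpt pts a p j))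
        = ((n:ℝ) - 1) * u (xpt pts a p q)
          - ((∑ j, u (xpt pts a p j)) - u (xpt pts a p q)) := by
      rw [Finset.sum_sub_distrib, Finset.filter_ne', Finset.sum_const,
        Finset.card_erase_of_mem (Finset.mem_univ q), Finset.card_univ, Fintype.card_fin,
        nsmul_eq_mul]
      push_cast [Nat.cast_sub hn1]
      linarith [h4]
    have e2 : ∑ j ∈ Finset.univ.filter (· ≠ p), (u (xpt pts a p q) - u (xpt pts a q j))
        = ((n:ℝ) - 1) * u (xpt pts a p q)
          - ((∑ j, u (xpt pts a q j)) - u (xpt pts a p q)) := by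
      rw [Finset.sum_sub_distrib, Finset.filter_ne', Finset.sum_const,
        Finset.card_erase_of_mem (Finset.mem_univ p), Finset.card_univ, Fintype.card_fin,
        nsmul_eq_mul]
      push_cast [Nat.cast_sub hn1]
      linarith [h5]
    rw [e1, e2] at h
    linear_combination h
  have hS : ∀ p : Fin n, (((n:ℝ)+2) - lam) * (∑ j, u (xpt pts a p j))
      = (2*(n:ℝ) - lam) * u (xpt pts a p p) + (∑ q, ∑ j, u (xpt pts a q j)) := by
    intro p
    have h1 : ∑ q ∈ Finset.univ.erase p, ((2*(n:ℝ) - lam) * u (xpt pts a p q))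
        = ∑ q ∈ Finset.univ.erase p,
            ((∑ j, u (xpt pts a p j)) + (∑ j, u (xpt pts a q j))) :=
      Finset.sum_congr rfl (fun q hq => key p q (Ne.symm (Finset.mem_erase.mp hq).1))
    rw [← Finset.mul_sum, Finset.sum_add_distrib, Finset.sum_const,
      Finset.card_erase_of_mem (Finset.mem_univ p), Finset.card_univ, Fintype.card_fin,
      nsmul_eq_mul] at h1
    have h4 : (∑ q ∈ Finset.univ.erase p, u (xpt pts a p q)) + u (xpt pts a p p)
        = ∑ j, u (xpt pts a p j) := Finset.sum_erase_add _ _ (Finset.mem_univ p)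
    have h5 : (∑ q ∈ Finset.univ.erase p, ∑ j, u (xpt pts a q j)) + (∑ j, u (xpt pts a p j))
        = ∑ q, ∑ j, u (xpt pts a q j) := Finset.sum_erase_add _ _ (Finset.mem_univ p)
    push_cast [Nat.cast_sub hn1] at h1
    linear_combination h1 - (2*(n:ℝ) - lam) * h4 + h5
  have hTot : (2 - lam) * (∑ q, ∑ j, u (xpt pts a q j))
      = (2*(n:ℝ) - lam) * (∑ j, u (xpt pts a j j)) := by
    have h1 : ∑ p, ((((n:ℝ)+2) - lam) * (∑ j, u (xpt pts a p j)))
        = ∑ p, ((2*(n:ℝ) - lam) * u (xpt pts a p p) + (∑ q, ∑ j, u (xpt pts a q j))) :=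
      Finset.sum_congr rfl (fun p _ => hS p)
    rw [← Finset.mul_sum, Finset.sum_add_distrib, ← Finset.mul_sum, Finset.sum_const,
      Finset.card_univ, Fintype.card_fin, nsmul_eq_mul] at h1
    linear_combination h1
  have hy : u (xpt pts a r s)
      = ((∑ j, u (xpt pts a r j)) + (∑ j, u (xpt pts a s j))) / (2*(n:ℝ) - lam) := by
    rw [eq_div_iff hC]; linear_combination key r s hrs
  have hSr : (∑ j, u (xpt pts a r j))
      = ((2*(n:ℝ) - lam) * u (xpt pts a r r) + (∑ q, ∑ j, u (xpt pts a q j)))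
        / (((n:ℝ)+2) - lam) := by
    rw [eq_div_iff hB]; linear_combination hS r
  have hSs : (∑ j, u (xpt pts a s j))
      = ((2*(n:ℝ) - lam) * u (xpt pts a s s) + (∑ q, ∑ j, u (xpt pts a q j)))
        / (((n:ℝ)+2) - lam) := by
    rw [eq_div_iff hB]; linear_combination hS s
  have hT : (∑ q, ∑ j, u (xpt pts a q j))
      = (2*(n:ℝ) - lam) * (∑ j, u (xpt pts a j j)) / (2 - lam) := by
    rw [eq_div_iff hA]; linear_combination hTot
  have hfilter : ∑ j ∈ Finset.univ.filter (fun j => j ≠ r ∧ j ≠ s), u (xpt pts a j j)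
      = (∑ j, u (xpt pts a j j)) - u (xpt pts a r r) - u (xpt pts a s s) := by
    have hset : Finset.univ.filter (fun j => j ≠ r ∧ j ≠ s)
        = (Finset.univ.erase r).erase s := by
      ext j
      simp only [Finset.mem_filter, Finset.mem_erase, Finset.mem_univ, true_and, and_true]
      tauto
    rw [hset]
    have h4 : (∑ j ∈ (Finset.univ.erase r).erase s, u (xpt pts a j j)) + u (xpt pts a s s)
        = ∑ j ∈ Finset.univ.erase r, u (xpt pts a j j) :=
      Finset.sum_erase_add _ _ (Finset.mem_erase.mpr ⟨Ne.symm hrs, Finset.mem_univ s⟩)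
    have h5 : (∑ j ∈ Finset.univ.erase r, u (xpt pts a j j)) + u (xpt pts a r r)
        = ∑ j, u (xpt pts a j j) := Finset.sum_erase_add _ _ (Finset.mem_univ r)
    linarith
  rw [hfilter, hy, hSr, hSs, hT]
  field_simp
  ring

/-- The extension formula (equation (5)) is necessary. -/
theorem extension_formula_necessary
    (n : ℕ) (hn : 2 ≤ n) (pts : Fin n → Amb n) (hpts : AffineIndependent ℝ pts)
    (m : ℕ) (hm : 1 ≤ m) (a : Fin (m - 1) → Fin n) (lam : ℝ)
    (h2 : lam ≠ 2) (hn2 : lam ≠ (n : ℝ) + 2) (h2n : lam ≠ 2 * n)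
    (u : Amb n → ℝ) (hu : IsEigen pts m u lam)
    (r s : Fin n) (hrs : r ≠ s) :
    u (xpt pts a r s) =
      ((4 - lam) * (u (xpt pts a r r) + u (xpt pts a s s)) +
          2 * ∑ j ∈ Finset.univ.filter (fun j => j ≠ r ∧ j ≠ s), u (xpt pts a j j)) /
        ((2 - lam) * (((n : ℝ) + 2) - lam)) := by
  obtain ⟨m', rfl⟩ : ∃ m', m = m' + 1 := ⟨m - 1, (Nat.succ_pred_eq_of_pos hm).symm⟩
  exact extension_helper n hn pts hpts m' a lam h2 hn2 h2n u hu r s hrs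
end
end

section
/- Convergence of the renormalized eigenvalue sequence (final claim of Section 6): Let n ≥ 2 be an integer, M ∈ ℕ, and let (λ_m)_{m≥0} be a sequence of real numbers such that λ_{m−1} = (n+2)·λ_m − λ_m² for all m ≥ 1 (i.e. each λ_m satisfies the quadratic λ_m² − (n+2)λ_m + λ_{m−1} = 0), and such that 0 ≤ λ_m ≤ (n+2)/2 for all m ≥ M (equivalently, the branch λ_m = ((n+2) − √((n+2)² − 4λ_{m−1}))/2 with the minus sign is chosen for all m ≥ M). Then the sequence ( (n+2)^m · λ_m )_{m≥0} converges to a finite real limit. -/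
open Finset

noncomputable section

/-!
Put `q = n + 2` and `a_m = q^m λ_m`. The recursion reads `a_{m-1} = a_m (1 - λ_m / q)`, so `a` is
eventually nondecreasing. On the minus branch `λ_m ≤ q / 2`, hence `λ_{m-1} ≥ (q/2) λ_m`: the
`λ_m` decay geometrically, and `a_m ≤ a_{m-1} (1 + 2 λ_m / q)` with a summable perturbation, so
`a` is bounded by the discrete Grönwall inequality and converges.
-/

open Filter Topology

theorem bddAbove_range_of_succ_le_one_add_mul {u c : ℕ → ℝ} (hu₀ : 0 ≤ u 0)
    (hc : ∀ n, 0 ≤ c n) (hcs : Summable c) (hu : ∀ n, u (n + 1) ≤ (1 + c n) * u n) :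
    BddAbove (Set.range u) := by
  refine ⟨u 0 * Real.exp (∑' i, c i), Set.forall_mem_range.2 fun n => ?_⟩
  calc u n ≤ (u 0 + ∑ k ∈ Ico 0 n, (0 : ℝ)) * Real.exp (∑ i ∈ Ico 0 n, c i) :=
        discrete_gronwall hu₀ (fun n _ => by simpa using hu n) (fun n _ => hc n)
          (fun _ _ => le_rfl) n.zero_le
    _ ≤ u 0 * Real.exp (∑' i, c i) := by
        rw [sum_const_zero, add_zero]
        gcongr
        exact hcs.sum_le_tsum _ fun i _ => hc i

namespace Decimation

variable {q : ℝ} {μ : ℕ → ℝ} {k : ℕ}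

theorem succ_le_two_div_mul (hq : 0 < q) (hrec : μ k = μ (k + 1) * (q - μ (k + 1)))
    (h₀ : 0 ≤ μ (k + 1)) (hhalf : μ (k + 1) ≤ q / 2) : μ (k + 1) ≤ 2 / q * μ k := by
  rw [hrec, div_mul_eq_mul_div, le_div_iff₀ hq]
  nlinarith

theorem summable (hq : 2 < q)
    (hrec : ∀ k, μ k = μ (k + 1) * (q - μ (k + 1)))
    (h₀ : ∀ k, 0 ≤ μ k) (hhalf : ∀ k, μ k ≤ q / 2) : Summable μ := by
  refine summable_of_ratio_norm_eventually_le (r := 2 / q) ((div_lt_one (by linarith)).2 hq)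
    (Eventually.of_forall fun k => ?_)
  rw [Real.norm_of_nonneg (h₀ _), Real.norm_of_nonneg (h₀ _)]
  exact succ_le_two_div_mul (by linarith) (hrec k) (h₀ _) (hhalf _)

theorem monotone_pow_mul (hq : 0 ≤ q) (hrec : ∀ k, μ k = μ (k + 1) * (q - μ (k + 1))) :
    Monotone fun k => q ^ k * μ k := by
  refine monotone_nat_of_le_succ fun k => ?_
  have hqk : 0 ≤ q ^ k := pow_nonneg hq k
  rw [hrec k, pow_succ]
  nlinarith [mul_nonneg hqk (sq_nonneg (μ (k + 1)))]

theorem pow_succ_mul_le_one_add_mul (hq : 0 < q) (hrec : μ k = μ (k + 1) * (q - μ (k + 1)))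
    (hhalf : μ (k + 1) ≤ q / 2) :
    q ^ (k + 1) * μ (k + 1) ≤ (1 + 2 / q * μ (k + 1)) * (q ^ k * μ k) := by
  have hqk : 0 ≤ q ^ k := by positivity
  rw [hrec, pow_succ]
  field_simp
  have hgap : 0 ≤ q - 2 * μ (k + 1) := by linarith
  nlinarith [mul_nonneg (mul_nonneg hqk (sq_nonneg (μ (k + 1)))) hgap]

theorem exists_tendsto_pow_mul (hq : 2 < q)
    (hrec : ∀ k, μ k = μ (k + 1) * (q - μ (k + 1)))
    (h₀ : ∀ k, 0 ≤ μ k) (hhalf : ∀ k, μ k ≤ q / 2) :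
    ∃ L, Tendsto (fun k => q ^ k * μ k) atTop (𝓝 L) := by
  have hq₀ : 0 < q := by linarith
  refine ⟨_, tendsto_atTop_ciSup (monotone_pow_mul hq₀.le hrec) ?_⟩
  refine bddAbove_range_of_succ_le_one_add_mul (c := fun k => 2 / q * μ (k + 1))
    (by simpa using h₀ 0) (fun k => by have := h₀ (k + 1); positivity)
    (((summable_nat_add_iff 1).2 (summable hq hrec h₀ hhalf)).mul_left _)
    fun k => pow_succ_mul_le_one_add_mul hq₀ (hrec k) (hhalf _)

end Decimation

/-- Convergence of the renormalized eigenvalue sequence. -/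
theorem renormalized_eigenvalue_limit
    (n : ℕ) (hn : 2 ≤ n) (M : ℕ) (lam : ℕ → ℝ)
    (hrec : ∀ m : ℕ, 1 ≤ m → lam m ^ 2 - ((n : ℝ) + 2) * lam m + lam (m - 1) = 0)
    (hbranch : ∀ m : ℕ, M ≤ m → 0 ≤ lam m ∧ lam m ≤ ((n : ℝ) + 2) / 2) :
    ∃ L : ℝ, Filter.Tendsto (fun m : ℕ => ((n : ℝ) + 2) ^ m * lam m)
      Filter.atTop (nhds L) := by
  have hq : (2 : ℝ) < n + 2 := by norm_cast; omega
  have hrec_shift : ∀ k, lam (k + M) = lam (k + 1 + M) * ((n + 2) - lam (k + 1 + M)) := by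
    intro k
    have := hrec (k + 1 + M) (by omega)
    rw [show k + 1 + M - 1 = k + M by omega] at this
    linarith
  obtain ⟨L, hL⟩ := Decimation.exists_tendsto_pow_mul hq hrec_shift
    (fun k => (hbranch (k + M) (by omega)).1) (fun k => (hbranch (k + M) (by omega)).2)
  refine ⟨((n : ℝ) + 2) ^ M * L, (tendsto_add_atTop_iff_nat M).1 ?_⟩
  convert hL.const_mul (((n : ℝ) + 2) ^ M) using 2 with k
  ring
end
end

section
/- Degree structure of the new vertices (Section 4, first structural claim): Let m ≥ 1. Every vertex x ∈ V_m \ V_{m−1} has exactly 2(n−1) neighbors in the graph Γ_m; exactly 2 of these neighbors lie in V_{m−1}, and hence exactly 2(n−2) of them lie in V_m \ V_{m−1}. -/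
open Finset

noncomputable section

/-! In barycentric coordinates with respect to `x_0, …, x_{n-1}`, the point `f_l(x_j)` has
coordinates `(wordWeight l + e_j) / 2^|l|`, and by affine independence these coordinates
determine the point. For `|t| = k`, the point `x = f_{t b}(x_j)` thus has numerators
`2 wordWeight t + e_b + e_j`, odd exactly at `b` and `j` when `b ≠ j`, whereas every point
`f_c(x_v) = f_{c v}(x_v)` of `V_k` has only even numerators at level `k + 1`. So `x` is new iff
`b ≠ j`, and then the parity pattern pins down the only two cells containing `x`,
`f_{t b}(V_0)` and `f_{t j}(V_0)`, which meet only in `x`. The neighbours of `x` are the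
`2(n-1)` other points of these cells, and the old ones among them are `f_t(x_b)` and
`f_t(x_j)`. -/

section

variable {n : ℕ} {pts : Fin n → Amb n}

def wordWeight : List (Fin n) → Fin n → ℕ
  | [] => 0
  | a :: t => wordWeight t + Pi.single a (2 ^ t.length)

lemma wordWeight_append_singleton (t : List (Fin n)) (b : Fin n) :
    wordWeight (t ++ [b]) = 2 • wordWeight t + Pi.single b 1 := by
  induction t with
  | nil => simp [wordWeight]
  | cons a t ih =>
    ext i
    simp only [List.cons_append, wordWeight, ih, List.length_append, List.length_cons,
      List.length_nil, pow_succ, Pi.add_apply, Pi.smul_apply, smul_eq_mul, Pi.single_apply]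
    split_ifs <;> ring

lemma sum_wordWeight_add_single (l : List (Fin n)) (j : Fin n) :
    ∑ i, (wordWeight l + Pi.single j 1 : Fin n → ℕ) i = 2 ^ l.length := by
  induction l with
  | nil => simp [wordWeight]
  | cons a t ih =>
    simp only [wordWeight, Pi.add_apply, sum_add_distrib, Finset.sum_pi_single', mem_univ,
      if_true, List.length_cons, pow_succ] at ih ⊢
    omega

lemma fList_eq (pts : Fin n → Amb n) (l : List (Fin n)) (x : Amb n) :
    fList pts l x =
      ((2 : ℝ) ^ l.length)⁻¹ • (x + ∑ i, (wordWeight l i : ℝ) • pts i) := by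
  induction l with
  | nil => simp [fList, wordWeight]
  | cons a t ih =>
    have hsum : ∑ i, (wordWeight (a :: t) i : ℝ) • pts i
        = ∑ i, (wordWeight t i : ℝ) • pts i + (2 : ℝ) ^ t.length • pts a := by
      simp [wordWeight, Pi.single_apply, add_smul, sum_add_distrib, ite_smul]
    rw [fList, Function.comp_apply, ih, fmap, hsum, List.length_cons, pow_succ]
    match_scalars <;> field_simp

lemma fList_pts_eq (pts : Fin n → Amb n) (l : List (Fin n)) (j : Fin n) :
    fList pts l (pts j) =
      ((2 : ℝ) ^ l.length)⁻¹ •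
        ∑ i, ((wordWeight l + Pi.single j 1 : Fin n → ℕ) i : ℝ) • pts i := by
  simp [fList_eq, Pi.single_apply, add_smul, sum_add_distrib, add_comm]

lemma fList_pts_eq_fList_pts_iff (hpts : AffineIndependent ℝ pts) {l l' : List (Fin n)}
    (hlen : l.length = l'.length) {j j' : Fin n} :
    fList pts l (pts j) = fList pts l' (pts j') ↔
      wordWeight l + Pi.single j 1 = wordWeight l' + Pi.single j' 1 := by
  rw [fList_pts_eq, fList_pts_eq, hlen, smul_right_inj (by positivity)]
  refine ⟨fun h => funext fun i => ?_, fun h => by rw [h]⟩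
  have htotal : ∑ i, ((wordWeight l + Pi.single j 1 : Fin n → ℕ) i : ℝ) =
      ∑ i, ((wordWeight l' + Pi.single j' 1 : Fin n → ℕ) i : ℝ) := by
    exact_mod_cast (sum_wordWeight_add_single l j).trans
      (hlen ▸ (sum_wordWeight_add_single l' j').symm)
  exact_mod_cast hpts.eq_of_sum_eq_sum htotal h i (mem_univ i)

lemma fList_eq_of_wordWeight_eq {l l' : List (Fin n)} (hlen : l.length = l'.length)
    (h : wordWeight l = wordWeight l') : fList pts l = fList pts l' :=
  funext fun x => by rw [fList_eq, fList_eq, hlen, h]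

lemma fList_injective (pts : Fin n → Amb n) (l : List (Fin n)) :
    Function.Injective (fList pts l) := fun x y h => by
  rw [fList_eq, fList_eq] at h
  exact add_right_cancel (smul_right_injective _ (by positivity) h)

lemma fList_append (pts : Fin n → Amb n) (l₁ l₂ : List (Fin n)) :
    fList pts (l₁ ++ l₂) = fList pts l₁ ∘ fList pts l₂ := by
  induction l₁ with
  | nil => rfl
  | cons a t ih => simp only [List.cons_append, fList, ih, Function.comp_assoc]

lemma fList_concat (pts : Fin n → Amb n) (t : List (Fin n)) (b : Fin n) (x : Amb n) :
    fList pts (t ++ [b]) x = fList pts t (fmap pts b x) := by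
  rw [fList_append]; rfl

lemma fList_concat_self (pts : Fin n → Amb n) (t : List (Fin n)) (b : Fin n) :
    fList pts (t ++ [b]) (pts b) = fList pts t (pts b) := by
  rw [fList_concat, fmap]; congr 1; module

lemma fList_concat_comm (pts : Fin n → Amb n) (t : List (Fin n)) (b j : Fin n) :
    fList pts (t ++ [b]) (pts j) = fList pts (t ++ [j]) (pts b) := by
  rw [fList_concat, fList_concat, fmap, fmap, add_comm]

def cell (pts : Fin n → Amb n) (l : List (Fin n)) : Set (Amb n) :=
  Set.range fun j => fList pts l (pts j)

lemma mem_cell {l : List (Fin n)} {x : Amb n} :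
    x ∈ cell pts l ↔ ∃ j, fList pts l (pts j) = x :=
  Set.mem_range

lemma List.exists_ofFn_iff {α : Type*} {m : ℕ} {P : List α → Prop} :
    (∃ w : Fin m → α, P (List.ofFn w)) ↔ ∃ l : List α, l.length = m ∧ P l :=
  ⟨fun ⟨w, hw⟩ => ⟨_, List.length_ofFn, hw⟩,
    fun ⟨l, hl, hP⟩ => by subst hl; exact ⟨l.get, by rwa [List.ofFn_get]⟩⟩

lemma List.exists_eq_concat_of_length_eq_succ {α : Type*} {l : List α} {k : ℕ}
    (hl : l.length = k + 1) : ∃ t b, t.length = k ∧ l = t ++ [b] := by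
  rcases List.eq_nil_or_concat' l with rfl | ⟨t, b, rfl⟩
  · simp at hl
  · exact ⟨t, b, by simpa using hl, rfl⟩

lemma fWord_image_range {m : ℕ} (w : Fin m → Fin n) :
    fWord pts w '' Set.range pts = cell pts (List.ofFn w) :=
  (Set.range_comp _ _).symm

lemma mem_V_iff {m : ℕ} {x : Amb n} :
    x ∈ V pts m ↔ ∃ l : List (Fin n), l.length = m ∧ x ∈ cell pts l := by
  simp only [V, Set.mem_iUnion, fWord_image_range]
  exact List.exists_ofFn_iff (P := (x ∈ cell pts ·))

lemma adj_iff {m : ℕ} {x y : Amb n} :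
    Adj pts m x y ↔
      x ≠ y ∧ ∃ l : List (Fin n), l.length = m ∧ x ∈ cell pts l ∧ y ∈ cell pts l := by
  simp only [Adj, fWord_image_range]
  exact and_congr_right'
    (List.exists_ofFn_iff (P := fun l => x ∈ cell pts l ∧ y ∈ cell pts l))

lemma mem_V_of_adj {m : ℕ} {x y : Amb n} (h : Adj pts m x y) : y ∈ V pts m :=
  let ⟨_, l, hl, _, hy⟩ := adj_iff.1 h
  mem_V_iff.2 ⟨l, hl, hy⟩

lemma fList_mem_V (l : List (Fin n)) (j : Fin n) : fList pts l (pts j) ∈ V pts l.length :=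
  mem_V_iff.2 ⟨l, rfl, j, rfl⟩

lemma mem_V_succ_iff {k : ℕ} {x : Amb n} :
    x ∈ V pts (k + 1) ↔ ∃ t b j, t.length = k ∧ fList pts (t ++ [b]) (pts j) = x := by
  refine ⟨fun hx => ?_, fun ⟨t, b, j, ht, hx⟩ =>
    hx ▸ by simpa [ht] using fList_mem_V (t ++ [b]) j⟩
  obtain ⟨l, hl, hx⟩ := mem_V_iff.1 hx
  obtain ⟨j, rfl⟩ := mem_cell.1 hx
  obtain ⟨t, b, ht, rfl⟩ := List.exists_eq_concat_of_length_eq_succ hl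
  exact ⟨t, b, j, ht, rfl⟩

lemma ncard_cell (hpts : AffineIndependent ℝ pts) (l : List (Fin n)) :
    (cell pts l).ncard = n := by
  rw [cell, Set.ncard_range_of_injective (f := fun j => fList pts l (pts j))
    ((fList_injective pts l).comp hpts.injective), Nat.card_fin]

lemma fList_concat_mem_V_iff (hpts : AffineIndependent ℝ pts) {t : List (Fin n)} {b j : Fin n} :
    fList pts (t ++ [b]) (pts j) ∈ V pts t.length ↔ b = j := by
  refine ⟨fun h => ?_, fun h => h ▸ fList_concat_self pts t b ▸ fList_mem_V t b⟩
  obtain ⟨c, hc, hv⟩ := mem_V_iff.1 h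
  obtain ⟨v, hv⟩ := mem_cell.1 hv
  rw [← fList_concat_self pts c v, fList_pts_eq_fList_pts_iff hpts (by simp [hc]),
    wordWeight_append_singleton, wordWeight_append_singleton] at hv
  by_contra hbj
  have hvb := congrFun hv b
  simp only [Pi.add_apply, Pi.smul_apply, smul_eq_mul, Pi.single_apply, if_neg hbj] at hvb
  split_ifs at hvb <;> omega

lemma Pi.single_add_single_apply_le_one {ι : Type*} [DecidableEq ι] {b j : ι} (hbj : b ≠ j)
    (i : ι) : (Pi.single b 1 + Pi.single j 1 : ι → ℕ) i ≤ 1 := by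
  simp only [Pi.add_apply, Pi.single_apply]
  split_ifs with hb hj
  exacts [absurd (hb.symm.trans hj) hbj, le_rfl, le_rfl, zero_le_one]

lemma cell_eq_or_cell_eq_of_mem (hpts : AffineIndependent ℝ pts) {t : List (Fin n)}
    {b j : Fin n} (hbj : b ≠ j) {l : List (Fin n)} (hl : l.length = t.length + 1)
    (hx : fList pts (t ++ [b]) (pts j) ∈ cell pts l) :
    cell pts l = cell pts (t ++ [b]) ∨ cell pts l = cell pts (t ++ [j]) := by
  obtain ⟨t', b', ht', rfl⟩ := List.exists_eq_concat_of_length_eq_succ hl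
  obtain ⟨j', hx⟩ := mem_cell.1 hx
  have hbj' : b' ≠ j' := fun h =>
    hbj ((fList_concat_mem_V_iff hpts).1 (hx ▸ ht' ▸ (fList_concat_mem_V_iff hpts).2 h))
  rw [fList_pts_eq_fList_pts_iff hpts (by simp [ht']), wordWeight_append_singleton,
    wordWeight_append_singleton, add_assoc, add_assoc] at hx
  have hparity (i : Fin n) := congrFun hx i
  have hle (i : Fin n) := Pi.single_add_single_apply_le_one hbj i
  have hle' (i : Fin n) := Pi.single_add_single_apply_le_one hbj' i
  simp only [Pi.add_apply, Pi.smul_apply, smul_eq_mul] at hparity hle hle'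
  have hw : wordWeight t' = wordWeight t := funext fun i => by
    have := hparity i; have := hle i; have := hle' i; omega
  have hb' : b' = b ∨ b' = j := by
    by_contra! h
    have := hparity b'
    rw [congrFun hw b', Pi.single_eq_same, Pi.single_eq_of_ne h.1, Pi.single_eq_of_ne h.2] at this
    omega
  have hcell : cell pts (t' ++ [b']) = cell pts (t ++ [b']) := by
    have hw' : wordWeight (t' ++ [b']) = wordWeight (t ++ [b']) := by
      rw [wordWeight_append_singleton, wordWeight_append_singleton, hw]
    rw [cell, cell, fList_eq_of_wordWeight_eq (by simp [ht']) hw']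
  rcases hb' with rfl | rfl
  · exact .inl hcell
  · exact .inr hcell

lemma cell_concat_inter_cell_concat (hpts : AffineIndependent ℝ pts) (t : List (Fin n))
    {b j : Fin n} (hbj : b ≠ j) :
    cell pts (t ++ [b]) ∩ cell pts (t ++ [j]) = {fList pts (t ++ [b]) (pts j)} := by
  refine Set.eq_singleton_iff_unique_mem.2
    ⟨⟨mem_cell.2 ⟨j, rfl⟩, mem_cell.2 ⟨b, (fList_concat_comm pts t b j).symm⟩⟩, ?_⟩
  rintro _ ⟨hp, hq⟩
  obtain ⟨p, rfl⟩ := mem_cell.1 hp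
  obtain ⟨q, hq⟩ := mem_cell.1 hq
  rw [fList_pts_eq_fList_pts_iff hpts (by simp), wordWeight_append_singleton,
    wordWeight_append_singleton] at hq
  have hpj : p = j := by
    by_contra hpj
    have := congrFun hq j
    simp only [Pi.add_apply, Pi.smul_apply, smul_eq_mul, Pi.single_eq_same,
      Pi.single_eq_of_ne hbj.symm, Pi.single_eq_of_ne (Ne.symm hpj)] at this
    omega
  rw [hpj]

lemma cell_concat_inter_V (hpts : AffineIndependent ℝ pts) (t : List (Fin n)) (b : Fin n) :
    cell pts (t ++ [b]) ∩ V pts t.length = {fList pts t (pts b)} := by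
  ext y
  refine ⟨fun ⟨hy, hyV⟩ => ?_, fun hy => ?_⟩
  · obtain ⟨p, rfl⟩ := mem_cell.1 hy
    rw [← (fList_concat_mem_V_iff hpts).1 hyV, fList_concat_self]
    rfl
  · rw [Set.mem_singleton_iff.1 hy]
    exact ⟨mem_cell.2 ⟨b, fList_concat_self pts t b⟩, fList_mem_V t b⟩

lemma setOf_adj_fList_concat_eq (hpts : AffineIndependent ℝ pts) (t : List (Fin n))
    {b j : Fin n} (hbj : b ≠ j) :
    {y | Adj pts (t.length + 1) (fList pts (t ++ [b]) (pts j)) y} =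
      (cell pts (t ++ [b]) ∪ cell pts (t ++ [j])) \ {fList pts (t ++ [b]) (pts j)} := by
  ext y
  simp only [Set.mem_ofPred_eq, adj_iff, Set.mem_sdiff, Set.mem_union, Set.mem_singleton_iff]
  constructor
  · rintro ⟨hne, l, hl, hx, hy⟩
    refine ⟨?_, Ne.symm hne⟩
    rcases cell_eq_or_cell_eq_of_mem hpts hbj hl hx with h | h
    · exact .inl (h ▸ hy)
    · exact .inr (h ▸ hy)
  · rintro ⟨hy | hy, hne⟩
    · exact ⟨Ne.symm hne, t ++ [b], by simp, mem_cell.2 ⟨j, rfl⟩, hy⟩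
    · exact ⟨Ne.symm hne, t ++ [j], by simp,
        mem_cell.2 ⟨b, (fList_concat_comm pts t b j).symm⟩, hy⟩

lemma ncard_setOf_adj_fList_concat (hpts : AffineIndependent ℝ pts) (t : List (Fin n))
    {b j : Fin n} (hbj : b ≠ j) :
    {y | Adj pts (t.length + 1) (fList pts (t ++ [b]) (pts j)) y}.ncard = 2 * (n - 1) := by
  have hunion := Set.ncard_union_add_ncard_inter (cell pts (t ++ [b])) (cell pts (t ++ [j]))
    (Set.finite_range _) (Set.finite_range _)
  rw [cell_concat_inter_cell_concat hpts t hbj, Set.ncard_singleton, ncard_cell hpts,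
    ncard_cell hpts] at hunion
  rw [setOf_adj_fList_concat_eq hpts t hbj,
    Set.ncard_sdiff_singleton_of_mem (.inl (mem_cell.2 ⟨j, rfl⟩))]
  omega

lemma setOf_adj_fList_concat_and_mem_V_eq (hpts : AffineIndependent ℝ pts) (t : List (Fin n))
    {b j : Fin n} (hbj : b ≠ j) :
    {y | Adj pts (t.length + 1) (fList pts (t ++ [b]) (pts j)) y ∧ y ∈ V pts t.length} =
      {fList pts t (pts b), fList pts t (pts j)} := by
  rw [Set.ofPred_and, Set.ofPred_mem_eq, setOf_adj_fList_concat_eq hpts t hbj,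
    Set.sdiff_inter_right_comm, Set.union_inter_distrib_right, cell_concat_inter_V hpts,
    cell_concat_inter_V hpts, Set.singleton_union, Set.sdiff_singleton_eq_self]
  rintro (h | h) <;> exact hbj ((fList_concat_mem_V_iff hpts).1 (h ▸ fList_mem_V t _))

lemma ncard_setOf_adj_fList_concat_and_mem_V (hpts : AffineIndependent ℝ pts) (t : List (Fin n))
    {b j : Fin n} (hbj : b ≠ j) :
    {y | Adj pts (t.length + 1) (fList pts (t ++ [b]) (pts j)) y ∧
      y ∈ V pts t.length}.ncard = 2 := by
  rw [setOf_adj_fList_concat_and_mem_V_eq hpts t hbj]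
  exact Set.ncard_pair ((fList_injective pts t).ne (hpts.injective.ne hbj))

lemma setOf_adj_and_mem_sdiff_eq {m : ℕ} {x : Amb n} (S : Set (Amb n)) :
    {y | Adj pts m x y ∧ y ∈ V pts m \ S} =
      {y | Adj pts m x y} \ {y | Adj pts m x y ∧ y ∈ S} := by
  ext y
  exact ⟨fun ⟨h, _, hS⟩ => ⟨h, fun h' => hS h'.2⟩,
    fun ⟨h, hS⟩ => ⟨h, mem_V_of_adj h, fun h' => hS ⟨h, h'⟩⟩⟩

end

theorem degree_structure_new_vertices_general
    (n : ℕ) (pts : Fin n → Amb n) (hpts : AffineIndependent ℝ pts)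
    (m : ℕ) (x : Amb n) (hx : x ∈ V pts m \ V pts (m - 1)) :
    {y | Adj pts m x y}.ncard = 2 * (n - 1) ∧
    {y | Adj pts m x y ∧ y ∈ V pts (m - 1)}.ncard = 2 ∧
    {y | Adj pts m x y ∧ y ∈ V pts m \ V pts (m - 1)}.ncard = 2 * (n - 2) := by
  obtain _ | k := m
  · exact absurd hx.1 hx.2
  obtain ⟨t, b, j, rfl, rfl⟩ := mem_V_succ_iff.1 hx.1
  simp only [Nat.add_sub_cancel] at hx ⊢
  have hbj : b ≠ j := fun h => hx.2 ((fList_concat_mem_V_iff hpts).2 h)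
  have hadj := ncard_setOf_adj_fList_concat hpts t hbj
  have hold := ncard_setOf_adj_fList_concat_and_mem_V hpts t hbj
  refine ⟨hadj, hold, ?_⟩
  rw [setOf_adj_and_mem_sdiff_eq, Set.ncard_sdiff (fun y hy => hy.1)
    (Set.finite_of_ncard_ne_zero (by simp [hold])), hadj, hold]
  omega

/-- Degree structure of the new vertices at level m. -/
theorem degree_structure_new_vertices
    (n : ℕ) (hn : 2 ≤ n) (pts : Fin n → Amb n) (hpts : AffineIndependent ℝ pts)
    (m : ℕ) (hm : 1 ≤ m) (x : Amb n) (hx : x ∈ V pts m \ V pts (m - 1)) :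
    {y | Adj pts m x y}.ncard = 2 * (n - 1) ∧
    {y | Adj pts m x y ∧ y ∈ V pts (m - 1)}.ncard = 2 ∧
    {y | Adj pts m x y ∧ y ∈ V pts m \ V pts (m - 1)}.ncard = 2 * (n - 2) :=
  degree_structure_new_vertices_general n pts hpts m x hx
end
end

section
/- Every non-boundary vertex lies in exactly two cells (Section 5, two-representations claim): For every m ≥ 1 and every x ∈ V_m \ V_0, there are exactly two words w ∈ (Fin n)^m such that x ∈ f_w(V_0). -/
open Finset

noncomputable section

/-!
Write `β(l, j)` for the barycentric coordinates of `f_l (x_j)`; for `l = a :: t` they are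
`β(a :: t, j) = ½ (β(t, j) + e_a)`, and by affine independence the point determines them.
If two words with different first letters `a ≠ a'` give the same point, the coordinates at `a'`
force `β(t, j) = e_{a'}`, i.e. the tail is the constant word `a'⋯a'` ending at `x_{a'}`, and
symmetrically. Hence a non-vertex point either has a representation `a b⋯b` (ending at `x_b`),
whose only partner is `b a⋯a` (ending at `x_a`), or its first letter is forced and we recurse
into the tail.
-/

lemma sum_pi_single_one_smul {ι R E : Type*} [Fintype ι] [DecidableEq ι] [Semiring R]
    [AddCommMonoid E] [Module R E] (p : ι → E) (b : ι) :
    ∑ i, (Pi.single b (1 : R) : ι → R) i • p i = p b := by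
  simp [Pi.single_apply]

lemma eq_single_of_one_le_of_sum_eq_one {ι : Type*} [Fintype ι] [DecidableEq ι] {v : ι → ℝ}
    (h0 : ∀ i, 0 ≤ v i) (h1 : ∑ i, v i = 1) {b : ι} (hb : 1 ≤ v b) : v = Pi.single b 1 := by
  have hsplit := Finset.add_sum_erase Finset.univ v (Finset.mem_univ b)
  have hnonneg : 0 ≤ ∑ i ∈ Finset.univ.erase b, v i := Finset.sum_nonneg fun i _ => h0 i
  have hvb : v b = 1 := by linarith
  have hrest : ∑ i ∈ Finset.univ.erase b, v i = 0 := by linarith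
  rw [Finset.sum_eq_zero_iff_of_nonneg fun i _ => h0 i] at hrest
  funext i
  by_cases hib : i = b
  · subst hib; simpa using hvb
  · simpa [hib] using hrest i (Finset.mem_erase.2 ⟨hib, Finset.mem_univ i⟩)

namespace SierpinskiSimplex

variable {n : ℕ}

/-- Barycentric coordinates of `f_l (x_j)` with respect to `x_0, …, x_{n-1}`. -/
def bary : List (Fin n) → Fin n → Fin n → ℝ
  | [], j => Pi.single j 1
  | a :: t, j => (2 : ℝ)⁻¹ • (bary t j + Pi.single a 1)

lemma bary_nonneg (l : List (Fin n)) (j i : Fin n) : 0 ≤ bary l j i := by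
  induction l with
  | nil => simp only [bary, Pi.single_apply]; positivity
  | cons a t ih => simp only [bary, Pi.smul_apply, Pi.add_apply, Pi.single_apply]; positivity

lemma sum_bary (l : List (Fin n)) (j : Fin n) : ∑ i, bary l j i = 1 := by
  induction l with
  | nil => simp [bary]
  | cons a t ih =>
    simp only [bary, Pi.smul_apply, Pi.add_apply, smul_eq_mul, ← Finset.mul_sum,
      Finset.sum_add_distrib, ih, Fintype.sum_pi_single']
    norm_num

lemma fList_apply_pts (pts : Fin n → Amb n) (l : List (Fin n)) (j : Fin n) :
    fList pts l (pts j) = ∑ i, bary l j i • pts i := by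
  induction l with
  | nil => simp [fList, bary]
  | cons a t ih =>
    simp only [fList, Function.comp_apply, fmap, ih, bary, Pi.smul_apply, Pi.add_apply,
      smul_eq_mul, mul_smul, ← Finset.smul_sum, add_smul, Finset.sum_add_distrib,
      sum_pi_single_one_smul]

lemma bary_eq_of_fList_eq {pts : Fin n → Amb n} (hpts : AffineIndependent ℝ pts)
    {l l' : List (Fin n)} {j j' : Fin n} (h : fList pts l (pts j) = fList pts l' (pts j')) :
    bary l j = bary l' j' := by
  rw [fList_apply_pts, fList_apply_pts] at h
  funext i
  exact hpts.eq_of_sum_eq_sum (by rw [sum_bary, sum_bary]) h i (Finset.mem_univ i)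

lemma bary_replicate (k : ℕ) (b : Fin n) : bary (List.replicate k b) b = Pi.single b 1 := by
  induction k with
  | zero => rfl
  | succ k ih => rw [List.replicate_succ, bary, ih, ← two_smul ℝ, smul_smul]; norm_num

lemma eq_replicate_of_bary_eq_single {l : List (Fin n)} {j b : Fin n}
    (h : bary l j = Pi.single b 1) : l = List.replicate l.length b ∧ j = b := by
  induction l with
  | nil =>
    refine ⟨rfl, by_contra fun hjb => ?_⟩
    simpa [bary, hjb] using congrFun h j
  | cons a t ih =>
    have hab : a = b := by
      by_contra hab
      have := congrFun h a
      simp [bary, hab] at this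
      linarith [bary_nonneg t j a]
    subst hab
    have ht : bary t j = Pi.single a 1 := by
      funext i
      have := congrFun h i
      simp only [bary, Pi.smul_apply, Pi.add_apply, smul_eq_mul] at this
      linarith
    obtain ⟨ht, rfl⟩ := ih ht
    exact ⟨by rw [List.length_cons, List.replicate_succ, ← ht], rfl⟩

lemma bary_cons_inj {a : Fin n} {t t' : List (Fin n)} {j j' : Fin n} :
    bary (a :: t) j = bary (a :: t') j' ↔ bary t j = bary t' j' := by
  simp [bary]

lemma bary_eq_single_of_cons_eq_cons {a a' : Fin n} {t t' : List (Fin n)} {j j' : Fin n}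
    (hne : a ≠ a') (h : bary (a :: t) j = bary (a' :: t') j') : bary t j = Pi.single a' 1 := by
  refine eq_single_of_one_le_of_sum_eq_one (bary_nonneg t j) (sum_bary t j) ?_
  have := congrFun h a'
  simp [bary, hne] at this
  linarith [bary_nonneg t' j' a']

/-- The words of the length of `l` whose cell has `f_l (x_j)` as a vertex (given that the
`x_i` are affinely independent). -/
def cellWords (l : List (Fin n)) (j : Fin n) : Set (List (Fin n)) :=
  {l' | l'.length = l.length ∧ ∃ j', bary l' j' = bary l j}

lemma cellWords_cons_of_forall_ne {a : Fin n} {t : List (Fin n)} {j : Fin n}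
    (h : ∀ b, bary t j ≠ Pi.single b 1) : cellWords (a :: t) j = (a :: ·) '' cellWords t j := by
  ext l'
  constructor
  · rintro ⟨hlen, j', he⟩
    obtain ⟨a', t', rfl⟩ := List.exists_cons_of_length_eq_add_one hlen
    obtain rfl | hne := eq_or_ne a' a
    · exact ⟨t', ⟨by simpa using hlen, j', bary_cons_inj.1 he⟩, rfl⟩
    · exact absurd (bary_eq_single_of_cons_eq_cons hne.symm he.symm) (h a')
  · rintro ⟨t', ⟨hlen, j', he⟩, rfl⟩
    exact ⟨by simp [hlen], j', bary_cons_inj.2 he⟩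

lemma cellWords_cons_replicate {a b : Fin n} (hab : a ≠ b) (k : ℕ) :
    cellWords (a :: List.replicate k b) b =
      {a :: List.replicate k b, b :: List.replicate k a} := by
  ext l'
  constructor
  · rintro ⟨hlen, j', he⟩
    obtain ⟨a', t', rfl⟩ := List.exists_cons_of_length_eq_add_one hlen
    have ht' : t'.length = k := by simpa using hlen
    obtain rfl | hne := eq_or_ne a' a
    · rw [bary_cons_inj, bary_replicate] at he
      left
      rw [(eq_replicate_of_bary_eq_single he).1, ht']
    · right
      have hb : b = a' :=
        (eq_replicate_of_bary_eq_single (bary_eq_single_of_cons_eq_cons hne.symm he.symm)).2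
      rw [hb, (eq_replicate_of_bary_eq_single (bary_eq_single_of_cons_eq_cons hne he)).1, ht']
      rfl
  · rintro (rfl | rfl)
    · exact ⟨rfl, b, rfl⟩
    · refine ⟨by simp, a, ?_⟩
      simp only [bary, bary_replicate, add_comm]

theorem ncard_cellWords {l : List (Fin n)} {j : Fin n} (h : ∀ b, bary l j ≠ Pi.single b 1) :
    (cellWords l j).ncard = 2 := by
  induction l generalizing j with
  | nil => exact absurd rfl (h j)
  | cons a t ih =>
    by_cases ht : ∃ b, bary t j = Pi.single b 1
    · obtain ⟨b, hb⟩ := ht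
      obtain ⟨htail, rfl⟩ := eq_replicate_of_bary_eq_single hb
      have hab : a ≠ j := by
        rintro rfl
        rw [htail, ← List.replicate_succ] at h
        exact h a (bary_replicate _ a)
      rw [htail, cellWords_cons_replicate hab, Set.ncard_pair (by simp [hab])]
    · simp only [not_exists] at ht
      rw [cellWords_cons_of_forall_ne ht, Set.ncard_image_of_injective _ List.cons_injective,
        ih ht]

lemma ofFn_image_cells {pts : Fin n → Amb n} (hpts : AffineIndependent ℝ pts) {m : ℕ}
    (w₀ : Fin m → Fin n) (j₀ : Fin n) :
    List.ofFn '' {w : Fin m → Fin n | fWord pts w₀ (pts j₀) ∈ fWord pts w '' Set.range pts} =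
      cellWords (List.ofFn w₀) j₀ := by
  ext l
  constructor
  · rintro ⟨w, ⟨_, ⟨j, rfl⟩, he⟩, rfl⟩
    exact ⟨by simp, j, bary_eq_of_fList_eq hpts he⟩
  · rintro ⟨hlen, j, he⟩
    rw [List.length_ofFn] at hlen
    subst hlen
    refine ⟨l.get, ⟨pts j, ⟨j, rfl⟩, ?_⟩, List.ofFn_get l⟩
    rw [fWord, fWord, List.ofFn_get, fList_apply_pts, fList_apply_pts, he]

end SierpinskiSimplex

open SierpinskiSimplex in
theorem vertex_in_exactly_two_cells_general
    (n : ℕ) (pts : Fin n → Amb n) (hpts : AffineIndependent ℝ pts)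
    (m : ℕ) (x : Amb n) (hx : x ∈ V pts m \ V pts 0) :
    {w : Fin m → Fin n | x ∈ fWord pts w '' Set.range pts}.ncard = 2 := by
  obtain ⟨hxm, hx0⟩ := hx
  obtain ⟨w₀, _, ⟨j₀, rfl⟩, rfl⟩ := Set.mem_iUnion.1 hxm
  have hnonvertex : ∀ b, bary (List.ofFn w₀) j₀ ≠ Pi.single b 1 := by
    intro b hb
    refine hx0 (Set.mem_iUnion.2 ⟨Fin.elim0, pts b, ⟨b, rfl⟩, ?_⟩)
    rw [fWord, fWord, fList_apply_pts, fList_apply_pts, hb]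
    simp [bary]
  rw [← Set.ncard_image_of_injective _ List.ofFn_injective, ofFn_image_cells hpts,
    ncard_cellWords hnonvertex]

/-- Every non-boundary vertex of V_m lies in exactly two cells of level m. -/
theorem vertex_in_exactly_two_cells
    (n : ℕ) (hn : 2 ≤ n) (pts : Fin n → Amb n) (hpts : AffineIndependent ℝ pts)
    (m : ℕ) (hm : 1 ≤ m) (x : Amb n) (hx : x ∈ V pts m \ V pts 0) :
    {w : Fin m → Fin n | x ∈ fWord pts w '' Set.range pts}.ncard = 2 :=
  vertex_in_exactly_two_cells_general n pts hpts m x hx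
end
end
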